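/- arXiv:2504.05256 — 3 statements merged into one kernel-verified Lean document; each statement's English description precedes it below -/
import Mathlib

section
/- For every monomial element x^Λ Δ_k in the base subgroup B_k of W_n, there exists a monic monomial element w in W_n such that the commutator [x^Λ Δ_k, w] lies in B_k and pdeg([x^Λ Δ_k, w]) = pdeg(x^Λ Δ_k) - 1. -/
open Equiv MvPolynomial
open scoped commutatorElement

namespace Wreath

variable (p n : ℕ)

/-- The set of `pⁿ` points on which `W n` acts. -/
abbrev Pts := Fin n → ZMod p

/-- Truncation of a point: keep coordinates below `k`, zero out the rest. -/
def trunc (k : Fin n) (x : Pts p n) : Pts p n := fun j => if j < k then x j else 0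

lemma trunc_update (k : Fin n) (x : Pts p n) (v : ZMod p) :
    trunc p n k (Function.update x k v) = trunc p n k x := by
  funext j
  by_cases hj : j < k
  · simp [trunc, Function.update_of_ne (ne_of_lt hj), hj]
  · simp [trunc, hj]

/-- The permutation `FΔₖ` of `𝔽_pⁿ` sending `x` to `x - F(x₁,…,x_{k-1}) eₖ`. -/
def delta (k : Fin n) (F : Pts p n → ZMod p) : Equiv.Perm (Pts p n) where
  toFun x := Function.update x k (x k - F (trunc p n k x))
  invFun x := Function.update x k (x k + F (trunc p n k x))
  left_inv x := by
    simp only [trunc_update, Function.update_idem, Function.update_self,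
      sub_add_cancel, Function.update_eq_self]
  right_inv x := by
    simp only [trunc_update, Function.update_idem, Function.update_self,
      add_sub_cancel_right, Function.update_eq_self]

/-- A permutation of `𝔽_pⁿ` is triangular if the displacement of the `k`-th coordinate
only depends on the coordinates below `k`.  The triangular permutations form exactly the
iterated wreath product `W_n = ≀ⁿ 𝔽_p`, a Sylow `p`-subgroup of `Sym(pⁿ)`. -/
def Triangular (π : Equiv.Perm (Pts p n)) : Prop :=
  ∀ (k : Fin n) (x y : Pts p n), (∀ j : Fin n, j < k → x j = y j) →
    π x k - x k = π y k - y k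

lemma Triangular.agree {π : Equiv.Perm (Pts p n)} (hπ : Triangular p n π) {k : Fin n}
    {x y : Pts p n} (h : ∀ j : Fin n, j < k → x j = y j) :
    ∀ j : Fin n, j < k → π x j = π y j := by
  intro j hj
  have h2 := hπ j x y (fun i hi => h i (hi.trans hj))
  rw [h j hj] at h2
  exact sub_left_inj.mp h2

lemma Triangular.mul {π σ : Equiv.Perm (Pts p n)} (hπ : Triangular p n π)
    (hσ : Triangular p n σ) : Triangular p n (π * σ) := by
  intro k x y h
  have h1 := hπ k (σ x) (σ y) (hσ.agree p n h)
  have h2 := hσ k x y h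
  simp only [Equiv.Perm.mul_apply]
  linear_combination h1 + h2

lemma Triangular.one : Triangular p n 1 := by
  intro k x y h
  simp [h k]

lemma Triangular.inv {π : Equiv.Perm (Pts p n)} (hπ : Triangular p n π) :
    Triangular p n π⁻¹ := by
  intro k x y h
  have key : ∀ m : ℕ, ∀ j : Fin n, (j : ℕ) ≤ m → j < k → π⁻¹ x j = π⁻¹ y j := by
    intro m
    induction m with
    | zero =>
      intro j hj hjk
      have hb : ∀ i : Fin n, i < j → π⁻¹ x i = π⁻¹ y i := by
        intro i hi
        have hi' : (i : ℕ) < (j : ℕ) := hi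
        omega
      have ht := hπ j (π⁻¹ x) (π⁻¹ y) hb
      simp only [Equiv.Perm.inv_def, Equiv.apply_symm_apply] at ht
      rw [h j hjk] at ht
      exact (sub_right_inj.mp ht)
    | succ m ih =>
      intro j hj hjk
      have hb : ∀ i : Fin n, i < j → π⁻¹ x i = π⁻¹ y i := by
        intro i hi
        have hi' : (i : ℕ) < (j : ℕ) := hi
        exact ih i (by omega) (hi.trans hjk)
      have ht := hπ j (π⁻¹ x) (π⁻¹ y) hb
      simp only [Equiv.Perm.inv_def, Equiv.apply_symm_apply] at ht
      rw [h j hjk] at ht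
      exact (sub_right_inj.mp ht)
  have hb : ∀ j : Fin n, j < k → π⁻¹ x j = π⁻¹ y j := fun j hj => key j j le_rfl hj
  have ht := hπ k (π⁻¹ x) (π⁻¹ y) hb
  simp only [Equiv.Perm.inv_def, Equiv.apply_symm_apply] at ht
  linear_combination -ht

/-- The subgroup of triangular permutations fixing every coordinate `j` satisfying `P j`. -/
def WB (P : Fin n → Prop) : Subgroup (Equiv.Perm (Pts p n)) where
  carrier := {π | Triangular p n π ∧ ∀ (x : Pts p n) (j : Fin n), P j → π x j = x j}
  one_mem' := ⟨Triangular.one p n, by intro x j _; simp⟩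
  mul_mem' := by
    rintro a b ⟨ha, ha'⟩ ⟨hb, hb'⟩
    refine ⟨ha.mul p n hb, ?_⟩
    intro x j hj
    simp only [Equiv.Perm.mul_apply]
    rw [ha' (b x) j hj, hb' x j hj]
  inv_mem' := by
    rintro a ⟨ha, ha'⟩
    refine ⟨ha.inv p n, ?_⟩
    intro x j hj
    have h := ha' (a⁻¹ x) j hj
    rw [Equiv.Perm.inv_def, Equiv.apply_symm_apply] at h
    exact h.symm

/-- `W p n = ≀ⁿ 𝔽_p` : the iterated wreath product, realized as the group of all
triangular permutations of `𝔽_pⁿ`. -/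
def W : Subgroup (Equiv.Perm (Pts p n)) := WB p n (fun _ => False)

/-- The `k`-th base subgroup `B_k` (elements `fΔₖ`, only the `k`-th coordinate moves). -/
def B (k : Fin n) : Subgroup (Equiv.Perm (Pts p n)) := WB p n (fun j => j ≠ k)

/-- The "tail" subgroup `B_{m+1} ⋯ B_n` (0-indexed: coordinates `< m` are fixed). -/
def Btail (m : ℕ) : Subgroup (Equiv.Perm (Pts p n)) := WB p n (fun j => (j : ℕ) < m)

/-- `γ_i(W_n)` (paper indexing: `γ₁ = W_n`), as a subgroup of `Perm (𝔽_pⁿ)`. -/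
def gammaP (i : ℕ) : Subgroup (Equiv.Perm (Pts p n)) :=
  Subgroup.map (W p n).subtype ((⊤ : Subgroup ↥(W p n)).lowerCentralSeries (i - 1))

/-- `Z_i(W_n)` (with `Z₀ = 1`), as a subgroup of `Perm (𝔽_pⁿ)`. -/
def ZP (i : ℕ) : Subgroup (Equiv.Perm (Pts p n)) :=
  Subgroup.map (W p n).subtype (upperCentralSeries ↥(W p n) i)

/-- The element `fΔₖ` of the base subgroup `B_k` attached to a polynomial `f`. -/
noncomputable def elt (f : MvPolynomial (Fin n) (ZMod p)) (k : Fin n) : Equiv.Perm (Pts p n) :=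
  delta p n k (fun t => eval t f)

/-- The monomial element `x^Λ Δₖ`. -/
noncomputable def monoElem (Λ : Fin n →₀ ℕ) (k : Fin n) : Equiv.Perm (Pts p n) :=
  elt p n (monomial Λ (1 : ZMod p)) k

/-- `pdeg(x^Λ) = Σ λⱼ pʲ` (coordinates 0-indexed). -/
def pdegM (Λ : Fin n →₀ ℕ) : ℕ := ∑ j : Fin n, Λ j * p ^ (j : ℕ)

/-- `μₖ = p^{n-1} - p^k` (0-indexed `k`). -/
def mu (k : Fin n) : ℕ := p ^ (n - 1) - p ^ (k : ℕ)

/-- `pdeg(x^Λ Δₖ) = pdeg(x^Λ) + μₖ`. -/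
def pdegMk (Λ : Fin n →₀ ℕ) (k : Fin n) : ℕ := pdegM p n Λ + mu p n k

/-- `pdeg(fΔₖ)`: maximum of the `pdeg` of the monomials of `f`, plus `μₖ`. -/
def pdegP (f : MvPolynomial (Fin n) (ZMod p)) (k : Fin n) : ℕ :=
  f.support.sup (pdegM p n) + mu p n k

/-- `f` is a reduced polynomial: every variable appears with degree at most `p - 1`. -/
def Reduced (f : MvPolynomial (Fin n) (ZMod p)) : Prop :=
  ∀ Λ ∈ f.support, ∀ j : Fin n, Λ j ≤ p - 1

/-- `f` only involves the variables `xⱼ` with `j < k`. -/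
def VarsLt (k : Fin n) (f : MvPolynomial (Fin n) (ZMod p)) : Prop :=
  ∀ Λ ∈ f.support, ∀ j : Fin n, Λ j ≠ 0 → j < k

/-- The normal closure of an element inside the group `W_n`: the smallest subgroup
containing `g` which is stable under conjugation by every element of `W_n`. -/
def normalClosureIn (g : Equiv.Perm (Pts p n)) : Subgroup (Equiv.Perm (Pts p n)) :=
  sInf {S | g ∈ S ∧ ∀ w ∈ W p n, ∀ s ∈ S, w * s * w⁻¹ ∈ S}

/-- The canonical elementary abelian regular subgroup `T = ⟨Δ₁, …, Δₙ⟩`. -/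
def T : Subgroup (Equiv.Perm (Pts p n)) :=
  Subgroup.closure (Set.range fun i : Fin n => delta p n i (fun _ => 1))

end Wreath

namespace Wreath
variable (p n : ℕ)

lemma delta_apply (k : Fin n) (F) (x) :
    delta p n k F x = Function.update x k (x k - F (trunc p n k x)) := rfl

lemma delta_inv_apply (k : Fin n) (F) (x) :
    (delta p n k F)⁻¹ x = Function.update x k (x k + F (trunc p n k x)) := rfl

lemma comm_delta (k i : Fin n) (hik : i < k) (F G : (Fin n → ZMod p) → ZMod p)
    (hF : ∀ x y, (∀ j, j < k → x j = y j) → F x = F y)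
    (hG : ∀ x y, (∀ j, j < i → x j = y j) → G x = G y) :
    ⁅delta p n k F, delta p n i G⁆ =
      delta p n k (fun x => F x - F (Function.update x i (x i + G x))) := by
  have htr : ∀ (l : Fin n) (H : (Fin n → ZMod p) → ZMod p)
      (hH : ∀ x y, (∀ j, j < l → x j = y j) → H x = H y) (x),
      H (trunc p n l x) = H x := by
    intro l H hH x
    exact hH _ _ (fun j hj => by simp [trunc, hj])
  refine Equiv.ext fun x => ?_
  simp only [commutatorElement_def, Equiv.Perm.mul_apply, delta_apply, delta_inv_apply]
  set u := G x with hu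
  rw [htr i G hG x, ← hu]
  set x1 := Function.update x i (x i + u) with hx1
  rw [htr k F hF x1]
  set x2 := Function.update x1 k (x1 k + F x1) with hx2
  have hx2i : x2 i = x i + u := by
    rw [hx2, Function.update_of_ne (ne_of_lt hik), hx1, Function.update_self]
  have hGx2 : G (trunc p n i x2) = u := by
    rw [htr i G hG x2, hu]
    refine hG _ _ (fun j hj => ?_)
    rw [hx2, Function.update_of_ne (ne_of_lt (hj.trans hik)), hx1,
      Function.update_of_ne (ne_of_lt hj)]
  rw [hGx2, hx2i]
  have hx3 : Function.update x2 i (x i + u - u) = Function.update x k (x k + F x1) := by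
    funext j
    by_cases hji : j = i
    · subst hji
      rw [Function.update_self, Function.update_of_ne (ne_of_lt hik), add_sub_cancel_right]
    · rw [Function.update_of_ne hji, hx2]
      by_cases hjk : j = k
      · subst hjk
        rw [Function.update_self, Function.update_self, hx1,
          Function.update_of_ne (ne_of_gt hik)]
      · rw [Function.update_of_ne hjk, Function.update_of_ne hjk, hx1,
          Function.update_of_ne hji]
  rw [hx3]
  set x3 := Function.update x k (x k + F x1) with hx3d
  have hFx3 : F (trunc p n k x3) = F x := by
    rw [htr k F hF x3]
    exact hF _ _ (fun j hj => by rw [hx3d, Function.update_of_ne (ne_of_lt hj)])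
  have hF' : F (trunc p n k x) - F (Function.update (trunc p n k x) i
      (trunc p n k x i + G (trunc p n k x))) = F x - F x1 := by
    rw [htr k F hF x]
    congr 1
    have hGt : G (trunc p n k x) = u := by
      rw [hu]; exact hG _ _ (fun j hj => by simp [trunc, hj.trans hik])
    rw [hGt]
    refine hF _ _ (fun j hj => ?_)
    by_cases hji : j = i
    · subst hji
      rw [Function.update_self, hx1, Function.update_self]
      congr 1
      simp [trunc, hik]
    · rw [Function.update_of_ne hji, hx1, Function.update_of_ne hji]
      simp [trunc, hj]
  rw [hF']
  rw [hFx3, hx3d, Function.update_idem, Function.update_self]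
  congr 1
  ring

lemma eval_monomial_congr (Λ : Fin n →₀ ℕ) (c : ZMod p) (x y : Pts p n)
    (h : ∀ j, Λ j ≠ 0 → x j = y j) :
    eval x (monomial Λ c) = eval y (monomial Λ c) := by
  rw [eval_monomial, eval_monomial]
  congr 1
  exact Finset.prod_congr rfl fun j hj => by
    simp only [h j (Finsupp.mem_support_iff.mp hj)]

lemma eval_monomial_prod (Λ : Fin n →₀ ℕ) (c : ZMod p) (x : Pts p n) :
    eval x (monomial Λ c) = c * ∏ j : Fin n, x j ^ Λ j := by
  rw [eval_monomial]
  congr 1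
  exact Finsupp.prod_fintype _ _ (fun j => pow_zero _)

end Wreath

section Aux

lemma geom_aux (p : ℕ) (hp : 1 ≤ p) : ∀ m : ℕ, ∑ j ∈ Finset.range m, (p - 1) * p ^ j = p ^ m - 1 := by
  intro m
  induction m with
  | zero => simp
  | succ m ih =>
    rw [Finset.sum_range_succ, ih]
    have h1 : 1 ≤ p ^ m := Nat.one_le_pow _ _ hp
    have h2 : (p - 1) * p ^ m = p * p ^ m - p ^ m := by
      rw [Nat.sub_mul, one_mul]
    have h3 : p ^ m ≤ p * p ^ m := Nat.le_mul_of_pos_left _ hp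
    have h4 : p * p ^ m = p ^ m * p := Nat.mul_comm _ _
    rw [pow_succ]
    omega

lemma idem_pow {R : Type*} [Monoid R] (a : R) (ha : a * a = a) :
    ∀ s : ℕ, 1 ≤ s → a ^ s = a := by
  intro s hs
  induction s with
  | zero => omega
  | succ s ih =>
    rcases Nat.eq_or_lt_of_le hs with h | h
    · rw [← h, pow_one]
    · rw [pow_succ, ih (by omega), ha]

end Aux

/-- for every monomial element `x^Λ Δₖ` there is a monic monomial element
`w = x^Θ Δⱼ` such that `[x^Λ Δₖ, w]` lies in `B_k` and has `pdeg` exactly one less. -/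
theorem exists_commutator_pdeg_pred (p n : ℕ) (hp : p.Prime) (hodd : p ≠ 2)
    (Λ : Fin n →₀ ℕ) (k : Fin n) (hr : ∀ j, Λ j ≤ p - 1) (hv : ∀ j, Λ j ≠ 0 → j < k)
    (hΛ : Λ ≠ 0) :
    ∃ (Θ : Fin n →₀ ℕ) (l : Fin n), (∀ j, Θ j ≤ p - 1) ∧ (∀ j, Θ j ≠ 0 → j < l) ∧
      ∃ g : MvPolynomial (Fin n) (ZMod p), Wreath.Reduced p n g ∧ Wreath.VarsLt p n k g ∧
        ⁅Wreath.monoElem p n Λ k, Wreath.monoElem p n Θ l⁆ = Wreath.elt p n g k ∧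
        Wreath.pdegP p n g k = Wreath.pdegMk p n Λ k - 1 := by
  classical
  haveI : Fact p.Prime := ⟨hp⟩
  have hp1 : 1 ≤ p := hp.one_lt.le
  have hsupp : Λ.support.Nonempty := Finsupp.support_nonempty_iff.mpr hΛ
  set i := Λ.support.min' hsupp with hidef
  have hi : Λ i ≠ 0 := Finsupp.mem_support_iff.mp (Λ.support.min'_mem hsupp)
  have hmin : ∀ j : Fin n, j < i → Λ j = 0 := by
    intro j hj
    by_contra hne
    exact absurd (Λ.support.min'_le j (Finsupp.mem_support_iff.mpr hne)) (not_le.mpr hj)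
  have hik : i < k := hv i hi
  set lami := Λ i with hlamidef
  have hlampos : 1 ≤ lami := Nat.one_le_iff_ne_zero.mpr hi
  have hlamle : lami ≤ p - 1 := hr i
  -- the monomial exponents
  set Θ : Fin n →₀ ℕ := Finsupp.equivFunOnFinite.symm
    (fun j => if (j : ℕ) < (i : ℕ) then p - 1 else 0) with hΘdef
  have hΘ : ∀ j : Fin n, Θ j = if (j : ℕ) < (i : ℕ) then p - 1 else 0 := fun j => rfl
  set E : ℕ → (Fin n →₀ ℕ) := fun m => Finsupp.equivFunOnFinite.symm
    (fun j => if (j : ℕ) < (i : ℕ) then p - 1 else if j = i then m else Λ j) with hEdef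
  have hE : ∀ (m : ℕ) (j : Fin n),
      E m j = if (j : ℕ) < (i : ℕ) then p - 1 else if j = i then m else Λ j := fun m j => rfl
  have hEi : ∀ m, E m i = m := by
    intro m
    rw [hE]
    simp
  set g : MvPolynomial (Fin n) (ZMod p) :=
    ∑ m ∈ Finset.range lami, monomial (E m) (-(Nat.choose lami m : ZMod p)) with hgdef
  have hΘv : ∀ j : Fin n, Θ j ≠ 0 → j < i := by
    intro j hj
    rw [hΘ] at hj
    rw [Fin.lt_def]
    by_contra h
    rw [if_neg (by omega : ¬ (j : ℕ) < (i : ℕ))] at hj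
    exact hj rfl
  have hmem : ∀ b ∈ g.support, ∃ m, m < lami ∧ b = E m := by
    intro b hb
    rw [hgdef] at hb
    obtain ⟨m, hm, hb2⟩ := Finset.mem_biUnion.mp (MvPolynomial.support_sum hb)
    have := MvPolynomial.support_monomial_subset hb2
    exact ⟨m, Finset.mem_range.mp hm, Finset.mem_singleton.mp this⟩
  set S3 := ∑ j : Fin n, (if (i : ℕ) < (j : ℕ) then Λ j * p ^ (j : ℕ) else 0) with hS3
  have hq1 : 1 ≤ p ^ (i : ℕ) := Nat.one_le_pow _ _ (by omega)
  have hpdegL : Wreath.pdegM p n Λ = lami * p ^ (i : ℕ) + S3 := by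
    rw [Wreath.pdegM]
    rw [show (∑ j : Fin n, Λ j * p ^ (j : ℕ)) = ∑ j : Fin n,
        ((if j = i then lami * p ^ (i : ℕ) else 0)
          + (if (i : ℕ) < (j : ℕ) then Λ j * p ^ (j : ℕ) else 0)) from
      Finset.sum_congr rfl fun j _ => by
        rcases lt_trichotomy (j : ℕ) (i : ℕ) with h | h | h
        · have hne : j ≠ i := fun he => by simp [he] at h
          have h2 : ¬ (i : ℕ) < (j : ℕ) := by omega
          simp [hmin j (Fin.lt_def.mpr h), hne, h2]
        · have he : j = i := Fin.ext h
          subst he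
          simp [hlamidef]
        · have hne : j ≠ i := fun he => by simp [he] at h
          simp [hne, h]]
    rw [Finset.sum_add_distrib, Finset.sum_ite_eq' Finset.univ i
      (fun _ => lami * p ^ (i : ℕ)), if_pos (Finset.mem_univ i), hS3]
  have hS1 : (∑ j : Fin n, if (j : ℕ) < (i : ℕ) then (p - 1) * p ^ (j : ℕ) else 0)
      = p ^ (i : ℕ) - 1 := by
    rw [Fin.sum_univ_eq_sum_range (fun j => if j < (i : ℕ) then (p - 1) * p ^ j else 0) n]
    rw [← Finset.sum_subset (Finset.range_subset_range.mpr i.isLt.le)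
      (fun x _ hx => if_neg (fun hc => hx (Finset.mem_range.mpr hc)))]
    rw [Finset.sum_congr rfl (fun x hx => if_pos (Finset.mem_range.mp hx))]
    exact geom_aux p hp1 _
  have hpdegE : ∀ m, Wreath.pdegM p n (E m)
      = (p ^ (i : ℕ) - 1) + (m * p ^ (i : ℕ) + S3) := by
    intro m
    rw [Wreath.pdegM]
    rw [show (∑ j : Fin n, E m j * p ^ (j : ℕ)) = ∑ j : Fin n,
        ((if (j : ℕ) < (i : ℕ) then (p - 1) * p ^ (j : ℕ) else 0)
          + ((if j = i then m * p ^ (i : ℕ) else 0)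
          + (if (i : ℕ) < (j : ℕ) then Λ j * p ^ (j : ℕ) else 0))) from
      Finset.sum_congr rfl fun j _ => by
        rw [hE]
        rcases lt_trichotomy (j : ℕ) (i : ℕ) with h | h | h
        · have hne : j ≠ i := fun he => by simp [he] at h
          have h2 : ¬ (i : ℕ) < (j : ℕ) := by omega
          simp [h, hne, h2]
        · have he : j = i := Fin.ext h
          subst he
          simp
        · have hne : j ≠ i := fun he => by simp [he] at h
          have h2 : ¬ (j : ℕ) < (i : ℕ) := by omega
          simp [hne, h, h2]]
    rw [Finset.sum_add_distrib, Finset.sum_add_distrib, hS1,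
      Finset.sum_ite_eq' Finset.univ i (fun _ => m * p ^ (i : ℕ)),
      if_pos (Finset.mem_univ i), hS3]
  have htopmem : E (lami - 1) ∈ g.support := by
    rw [MvPolynomial.mem_support_iff, hgdef, MvPolynomial.coeff_sum]
    rw [Finset.sum_eq_single (lami - 1)
      (fun m _ hm => by
        rw [MvPolynomial.coeff_monomial, if_neg]
        intro hEq
        exact hm (by rw [← hEi m, hEq, hEi]))
      (fun h => absurd (Finset.mem_range.mpr (by omega)) h)]
    rw [MvPolynomial.coeff_monomial, if_pos rfl]
    have hch : lami.choose (lami - 1) = lami := by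
      have h2 := Nat.choose_symm (Nat.sub_le lami 1)
      rw [show lami - (lami - 1) = 1 by omega] at h2
      rw [← h2, Nat.choose_one_right]
    rw [hch]
    refine neg_ne_zero.mpr ?_
    rw [Ne, ZMod.natCast_eq_zero_iff]
    intro hdvd
    have := Nat.le_of_dvd (by omega) hdvd
    omega
  have hsup : g.support.sup (Wreath.pdegM p n) = Wreath.pdegM p n Λ - 1 := by
    apply le_antisymm
    · refine Finset.sup_le fun b hb => ?_
      obtain ⟨m, hm, rfl⟩ := hmem b hb
      rw [hpdegE, hpdegL]
      have hmul : (m + 1) * p ^ (i : ℕ) ≤ lami * p ^ (i : ℕ) :=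
        Nat.mul_le_mul_right _ (by omega)
      have : (m + 1) * p ^ (i : ℕ) = m * p ^ (i : ℕ) + p ^ (i : ℕ) := by ring
      omega
    · have h1 := Finset.le_sup (f := Wreath.pdegM p n) htopmem
      rw [hpdegE, hpdegL] at *
      have hmul : (lami - 1) * p ^ (i : ℕ) + 1 * p ^ (i : ℕ) = lami * p ^ (i : ℕ) := by
        rw [← Nat.add_mul]
        congr 1
        omega
      omega
  refine ⟨Θ, i, ?_, ?_, g, ?_, ?_, ?_, ?_⟩
  · intro j
    rw [hΘ]
    split <;> omega
  · intro j hj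
    rw [hΘ] at hj
    rw [Fin.lt_def]
    by_contra h
    rw [if_neg (by omega : ¬ (j : ℕ) < (i : ℕ))] at hj
    exact hj rfl
  · -- Reduced
    intro b hb j
    obtain ⟨m, hm, rfl⟩ := hmem b hb
    rw [hE]
    have := hr j
    split_ifs <;> omega
  · -- VarsLt
    intro b hb j hj
    obtain ⟨m, hm, rfl⟩ := hmem b hb
    rw [hE] at hj
    split_ifs at hj with h1 h2
    · exact lt_trans (Fin.lt_def.mpr h1) hik
    · exact h2 ▸ hik
    · exact hv j hj
  · -- commutator
    have hFcong : ∀ x y : Wreath.Pts p n, (∀ j, j < k → x j = y j) →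
        eval x (monomial Λ (1 : ZMod p)) = eval y (monomial Λ (1 : ZMod p)) :=
      fun x y h => Wreath.eval_monomial_congr p n Λ 1 x y (fun j hj => h j (hv j hj))
    have hGcong : ∀ x y : Wreath.Pts p n, (∀ j, j < i → x j = y j) →
        eval x (monomial Θ (1 : ZMod p)) = eval y (monomial Θ (1 : ZMod p)) :=
      fun x y h => Wreath.eval_monomial_congr p n Θ 1 x y (fun j hj => h j (hΘv j hj))
    have key : ∀ x : Wreath.Pts p n,
        eval x (monomial Λ (1 : ZMod p)) -
          eval (Function.update x i (x i + eval x (monomial Θ (1 : ZMod p))))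
            (monomial Λ (1 : ZMod p)) = eval x g := by
      intro x
      set A := ∏ j : Fin n, (if (j : ℕ) < (i : ℕ) then x j ^ (p - 1) else 1) with hA
      set R := ∏ j : Fin n, (if (i : ℕ) < (j : ℕ) then x j ^ (Λ j) else 1) with hRd
      have cA : eval x (monomial Θ (1 : ZMod p)) = A := by
        rw [Wreath.eval_monomial_prod, one_mul, hA]
        refine Finset.prod_congr rfl fun j _ => ?_
        rw [hΘ]
        split_ifs with h
        · rfl
        · exact pow_zero _
      have cL : eval x (monomial Λ (1 : ZMod p)) = x i ^ lami * R := by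
        rw [Wreath.eval_monomial_prod, one_mul]
        rw [show (∏ j : Fin n, x j ^ Λ j) = ∏ j : Fin n,
            ((if j = i then x i ^ lami else 1) *
              (if (i : ℕ) < (j : ℕ) then x j ^ (Λ j) else 1)) from
          Finset.prod_congr rfl fun j _ => by
            rcases lt_trichotomy (j : ℕ) (i : ℕ) with h | h | h
            · have hne : j ≠ i := fun he => by simp [he] at h
              have h2 : ¬ (i : ℕ) < (j : ℕ) := by omega
              simp [hmin j (Fin.lt_def.mpr h), hne, h2]
            · have he : j = i := Fin.ext h
              subst he
              simp [hlamidef]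
            · have hne : j ≠ i := fun he => by simp [he] at h
              simp [hne, h]]
        rw [Finset.prod_mul_distrib, Finset.prod_ite_eq' Finset.univ i
          (fun _ => x i ^ lami), if_pos (Finset.mem_univ i), hRd]
      have cU : ∀ v : ZMod p, eval (Function.update x i v) (monomial Λ (1 : ZMod p))
          = v ^ lami * R := by
        intro v
        rw [Wreath.eval_monomial_prod, one_mul]
        rw [show (∏ j : Fin n, Function.update x i v j ^ Λ j) = ∏ j : Fin n,
            ((if j = i then v ^ lami else 1) *
              (if (i : ℕ) < (j : ℕ) then x j ^ (Λ j) else 1)) from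
          Finset.prod_congr rfl fun j _ => by
            rcases lt_trichotomy (j : ℕ) (i : ℕ) with h | h | h
            · have hne : j ≠ i := fun he => by simp [he] at h
              have h2 : ¬ (i : ℕ) < (j : ℕ) := by omega
              simp [hmin j (Fin.lt_def.mpr h), hne, h2]
            · have he : j = i := Fin.ext h
              subst he
              simp [hlamidef]
            · have hne : j ≠ i := fun he => by simp [he] at h
              simp [Function.update_of_ne hne, hne, h]]
        rw [Finset.prod_mul_distrib, Finset.prod_ite_eq' Finset.univ i
          (fun _ => v ^ lami), if_pos (Finset.mem_univ i), hRd]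
      have cE : ∀ (m : ℕ) (c : ZMod p), eval x (monomial (E m) c)
          = c * (A * (x i ^ m * R)) := by
        intro m c
        rw [Wreath.eval_monomial_prod]
        congr 1
        rw [show (∏ j : Fin n, x j ^ E m j) = ∏ j : Fin n,
            ((if (j : ℕ) < (i : ℕ) then x j ^ (p - 1) else 1) *
              ((if j = i then x i ^ m else 1) *
                (if (i : ℕ) < (j : ℕ) then x j ^ (Λ j) else 1))) from
          Finset.prod_congr rfl fun j _ => by
            rw [hE]
            rcases lt_trichotomy (j : ℕ) (i : ℕ) with h | h | h
            · have hne : j ≠ i := fun he => by simp [he] at h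
              have h2 : ¬ (i : ℕ) < (j : ℕ) := by omega
              simp [h, hne, h2]
            · have he : j = i := Fin.ext h
              subst he
              simp
            · have hne : j ≠ i := fun he => by simp [he] at h
              have h2 : ¬ (j : ℕ) < (i : ℕ) := by omega
              simp [hne, h, h2]]
        rw [Finset.prod_mul_distrib, Finset.prod_mul_distrib,
          Finset.prod_ite_eq' Finset.univ i (fun _ => x i ^ m),
          if_pos (Finset.mem_univ i), hA, hRd]
      have cAA : A * A = A := by
        rw [hA, ← Finset.prod_mul_distrib]
        refine Finset.prod_congr rfl fun j _ => ?_
        split_ifs with h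
        · by_cases hz : x j = 0
          · rw [hz, zero_pow (by omega : p - 1 ≠ 0), mul_zero]
          · rw [ZMod.pow_card_sub_one_eq_one hz, mul_one]
        · rw [mul_one]
      rw [cA, cL, cU, hgdef, map_sum]
      rw [Finset.sum_congr rfl (fun m _ => cE m (-(lami.choose m : ZMod p)))]
      have hadd : (x i + A) ^ lami
          = ∑ m ∈ Finset.range (lami + 1), x i ^ m * A ^ (lami - m) * (lami.choose m) := add_pow _ _ _
      rw [hadd, Finset.sum_range_succ]
      rw [Finset.sum_congr rfl (fun m hm => by
        rw [idem_pow A cAA (lami - m) (by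
          have := Finset.mem_range.mp hm
          omega)])]
      simp only [Nat.sub_self, pow_zero, mul_one, Nat.choose_self, Nat.cast_one]
      have hST : (∑ m ∈ Finset.range lami, x i ^ m * A * (lami.choose m : ZMod p)) * R
          + ∑ m ∈ Finset.range lami,
            -(lami.choose m : ZMod p) * (A * (x i ^ m * R)) = 0 := by
        rw [Finset.sum_mul, ← Finset.sum_add_distrib]
        exact Finset.sum_eq_zero fun m _ => by ring
      linear_combination -1 * hST
    have h1 : Wreath.monoElem p n Λ k
        = Wreath.delta p n k (fun x => eval x (monomial Λ (1 : ZMod p))) := rfl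
    have h2 : Wreath.monoElem p n Θ i
        = Wreath.delta p n i (fun x => eval x (monomial Θ (1 : ZMod p))) := rfl
    rw [h1, h2, Wreath.comm_delta p n k i hik _ _ hFcong hGcong]
    rw [show (fun x => eval x (monomial Λ (1 : ZMod p)) -
        eval (Function.update x i (x i + eval x (monomial Θ (1 : ZMod p))))
          (monomial Λ (1 : ZMod p))) = (fun x => eval x g) from funext key]
    rfl
  · -- pdeg
    rw [Wreath.pdegP, Wreath.pdegMk, hsup, hpdegL]
    have : 1 ≤ lami * p ^ (i : ℕ) := Nat.one_le_iff_ne_zero.mpr (by positivity)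
    omega
end

section
/- Let G be a group, A an abelian subgroup, B a normal subgroup of G with A ∩ B trivial, such that AB is normal in G and there exists a subgroup H ≤ N_G(A) with G = H(AB). Then [AB, G] = ([A,G] ∩ A)·[B,G]. -/
open scoped Pointwise
open scoped commutatorElement


/-- if `A` is abelian, `B ⊴ G`, `A ∩ B = 1`, `AB = A ⋉ B ⊴ G` and
`G = H(AB)` for some `H ≤ N_G(A)`, then `[AB, G] = ([A,G] ∩ A)·[B,G]`. -/
theorem commutator_semidirect {G : Type*} [Group G] (A B : Subgroup G) (hB : B.Normal)
    (hA : ∀ a ∈ A, ∀ b ∈ A, a * b = b * a) (hABtriv : A ⊓ B = ⊥)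
    (hN : (A ⊔ B).Normal)
    (H : Subgroup G) (hH : H ≤ Subgroup.normalizer (A : Set G))
    (hG : ∀ g : G, ∃ h ∈ H, ∃ a ∈ A, ∃ b ∈ B, g = h * (a * b)) :
    ⁅A ⊔ B, (⊤ : Subgroup G)⁆ = (⁅A, (⊤ : Subgroup G)⁆ ⊓ A) ⊔ ⁅B, (⊤ : Subgroup G)⁆ := by
  haveI := hB
  set N := (⁅A, (⊤ : Subgroup G)⁆ ⊓ A) ⊔ ⁅B, (⊤ : Subgroup G)⁆ with hNdef
  have hBG : (⁅B, (⊤ : Subgroup G)⁆).Normal := Subgroup.commutator_normal B ⊤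
  have hBG_le : ⁅B, (⊤ : Subgroup G)⁆ ≤ N := le_sup_right
  -- key: commutators of elements of A with anything lie in N
  have key : ∀ a ∈ A, ∀ g : G, ⁅a, g⁆ ∈ N := by
    intro a ha g
    obtain ⟨h, hh, a', ha', b, hb, rfl⟩ := hG g
    have e1 : ⁅a, h * (a' * b)⁆ = ⁅a, h⁆ * (h * ⁅a, a' * b⁆ * h⁻¹) := by group
    have e2 : ⁅a, a' * b⁆ = ⁅a, a'⁆ * (a' * ⁅a, b⁆ * a'⁻¹) := by group
    have hcomm : ⁅a, a'⁆ = 1 := by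
      rw [commutatorElement_eq_one_iff_mul_comm]; exact hA a ha a' ha'
    have hab : ⁅a, b⁆ ∈ ⁅B, (⊤ : Subgroup G)⁆ := by
      rw [← commutatorElement_inv]
      exact inv_mem (Subgroup.commutator_mem_commutator hb (Subgroup.mem_top a))
    have hmid : ⁅a, a' * b⁆ ∈ ⁅B, (⊤ : Subgroup G)⁆ := by
      rw [e2, hcomm, one_mul]
      exact hBG.conj_mem _ hab a'
    have hconj : h * ⁅a, a' * b⁆ * h⁻¹ ∈ ⁅B, (⊤ : Subgroup G)⁆ := hBG.conj_mem _ hmid h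
    have hah : ⁅a, h⁆ ∈ ⁅A, (⊤ : Subgroup G)⁆ ⊓ A := by
      refine ⟨Subgroup.commutator_mem_commutator ha (Subgroup.mem_top h), ?_⟩
      rw [commutatorElement_def]
      have hmem : h * a⁻¹ * h⁻¹ ∈ A :=
        (Subgroup.mem_normalizer_iff.mp (hH hh) a⁻¹).mp (inv_mem ha)
      have : a * h * a⁻¹ * h⁻¹ = a * (h * a⁻¹ * h⁻¹) := by group
      rw [this]
      exact mul_mem ha hmem
    rw [e1]
    exact mul_mem (Subgroup.mem_sup_left hah) (hBG_le hconj)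
  apply le_antisymm
  · rw [Subgroup.commutator_le]
    intro x hx g _
    have hx' : x ∈ (A : Set G) * (B : Set G) := by
      exact (Subgroup.mul_normal A B).symm ▸ hx
    obtain ⟨a, ha, b, hb, rfl⟩ := hx'
    have e : ⁅a * b, g⁆ = (a * ⁅b, g⁆ * a⁻¹) * ⁅a, g⁆ := by group
    rw [e]
    refine mul_mem (hBG_le (hBG.conj_mem _ ?_ a)) (key a ha g)
    exact Subgroup.commutator_mem_commutator hb (Subgroup.mem_top g)
  · exact sup_le (inf_le_left.trans (Subgroup.commutator_mono le_sup_left le_rfl))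
      (Subgroup.commutator_mono le_sup_right le_rfl)
end

section
/- Each term of the lower central series of W_n decomposes as the internal product of its intersections with the base subgroups: γ_i(W_n) = (γ_i(W_n) ∩ B_n) ⋊ ... ⋊ (γ_i(W_n) ∩ B_1). -/
open Equiv MvPolynomial

namespace Wreath

variable (p n : ℕ)

lemma mem_WB_iff {P : Fin n → Prop} {π : Equiv.Perm (Pts p n)} :
    π ∈ WB p n P ↔ Triangular p n π ∧ ∀ (x : Pts p n) (j : Fin n), P j → π x j = x j :=
  Iff.rfl

lemma mem_W_of_triangular {π : Equiv.Perm (Pts p n)} (hπ : Triangular p n π) :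
    π ∈ W p n :=
  ⟨hπ, fun _ _ h => h.elim⟩

/-- The retraction of a triangular permutation keeping only coordinates `< m`. -/
def rho (m : ℕ) (π : Equiv.Perm (Pts p n)) (hπ : Triangular p n π) :
    Equiv.Perm (Pts p n) where
  toFun x := fun j => if (j : ℕ) < m then π x j else x j
  invFun x := fun j => if (j : ℕ) < m then π⁻¹ x j else x j
  left_inv x := by
    funext j
    by_cases hj : (j : ℕ) < m
    · have hagree : ∀ i : Fin n, i < j →
          (fun j' : Fin n => if (j' : ℕ) < m then π x j' else x j') i = π x i := by
        intro i hi
        have : (i : ℕ) < m := lt_trans hi hj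
        simp [this]
      have h2 := (hπ.inv p n) j _ (π x) hagree
      simp only [Equiv.Perm.inv_def, Equiv.symm_apply_apply, if_pos hj] at h2 ⊢
      linear_combination h2
    · simp only [if_neg hj]
  right_inv x := by
    funext j
    by_cases hj : (j : ℕ) < m
    · have hagree : ∀ i : Fin n, i < j →
          (fun j' : Fin n => if (j' : ℕ) < m then π⁻¹ x j' else x j') i = π⁻¹ x i := by
        intro i hi
        have : (i : ℕ) < m := lt_trans hi hj
        simp [this]
      have h2 := hπ j _ (π⁻¹ x) hagree
      simp only [Equiv.Perm.inv_def, Equiv.apply_symm_apply, if_pos hj] at h2 ⊢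
      linear_combination h2
    · simp only [if_neg hj]

lemma rho_apply (m : ℕ) (π : Equiv.Perm (Pts p n)) (hπ : Triangular p n π)
    (x : Pts p n) (j : Fin n) :
    rho p n m π hπ x j = if (j : ℕ) < m then π x j else x j := rfl

lemma rho_inv (m : ℕ) (π : Equiv.Perm (Pts p n)) (hπ : Triangular p n π)
    (hπ' : Triangular p n π⁻¹) :
    (rho p n m π hπ)⁻¹ = rho p n m π⁻¹ hπ' :=
  Equiv.ext fun _ => rfl

lemma rho_triangular (m : ℕ) (π : Equiv.Perm (Pts p n)) (hπ : Triangular p n π) :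
    Triangular p n (rho p n m π hπ) := by
  intro k x y h
  rw [rho_apply, rho_apply]
  by_cases hk : (k : ℕ) < m
  · rw [if_pos hk, if_pos hk]
    exact hπ k x y h
  · rw [if_neg hk, if_neg hk]
    simp

lemma rho_mul (m : ℕ) (π σ : Equiv.Perm (Pts p n)) (hπ : Triangular p n π)
    (hσ : Triangular p n σ) (hπσ : Triangular p n (π * σ)) :
    rho p n m (π * σ) hπσ = rho p n m π hπ * rho p n m σ hσ := by
  apply Equiv.ext
  intro x
  funext j
  rw [Equiv.Perm.mul_apply, rho_apply, rho_apply]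
  by_cases hj : (j : ℕ) < m
  · rw [if_pos hj, if_pos hj, Equiv.Perm.mul_apply]
    have hagree : ∀ i : Fin n, i < j → rho p n m σ hσ x i = σ x i := by
      intro i hi
      rw [rho_apply, if_pos (lt_trans (Fin.lt_def.mp hi) hj)]
    have h2 := hπ j (rho p n m σ hσ x) (σ x) hagree
    have h3 : rho p n m σ hσ x j = σ x j := by rw [rho_apply, if_pos hj]
    rw [h3] at h2
    linear_combination -h2
  · rw [if_neg hj, if_neg hj, rho_apply, if_neg hj]

/-- The retraction as a group endomorphism of `W`. -/
def rhoHom (m : ℕ) : ↥(W p n) →* ↥(W p n) :=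
  MonoidHom.mk'
    (fun π => ⟨rho p n m π.1 π.2.1,
      mem_W_of_triangular p n (rho_triangular p n m π.1 π.2.1)⟩)
    (fun a b => Subtype.ext (rho_mul p n m a.1 b.1 a.2.1 b.2.1 (a * b).2.1))

lemma rho_of_n (g : Equiv.Perm (Pts p n)) (hg : Triangular p n g) :
    rho p n n g hg = g := by
  apply Equiv.ext
  intro x
  funext j
  rw [rho_apply, if_pos j.isLt]

lemma rho_zero (g : Equiv.Perm (Pts p n)) (hg : Triangular p n g) :
    rho p n 0 g hg = 1 := by
  apply Equiv.ext
  intro x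
  funext j
  rw [rho_apply, if_neg (Nat.not_lt_zero _)]
  rfl

lemma rho_B_lt (m : ℕ) (k : Fin n) (c : Equiv.Perm (Pts p n)) (hc : c ∈ B p n k)
    (h : (k : ℕ) < m) : rho p n m c hc.1 = c := by
  apply Equiv.ext
  intro x
  funext j
  rw [rho_apply]
  by_cases hj : (j : ℕ) < m
  · rw [if_pos hj]
  · rw [if_neg hj]
    exact (hc.2 x j (fun he => hj (by rw [he]; exact h))).symm

lemma rho_B_ge (m : ℕ) (k : Fin n) (c : Equiv.Perm (Pts p n)) (hc : c ∈ B p n k)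
    (h : m ≤ (k : ℕ)) : rho p n m c hc.1 = 1 := by
  apply Equiv.ext
  intro x
  funext j
  rw [rho_apply]
  by_cases hj : (j : ℕ) < m
  · rw [if_pos hj]
    have hne : j ≠ k := fun he => by
      rw [he] at hj
      omega
    rw [hc.2 x j hne]
    rfl
  · rw [if_neg hj]
    rfl

lemma comp_mem_B (g : Equiv.Perm (Pts p n)) (hg : Triangular p n g) (k : Fin n) :
    rho p n ((k : ℕ) + 1) g hg * (rho p n (k : ℕ) g hg)⁻¹ ∈ B p n k := by
  refine ⟨(rho_triangular p n _ g hg).mul p n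
    ((rho_triangular p n _ g hg).inv p n), ?_⟩
  intro x j hjk
  rw [Equiv.Perm.mul_apply, rho_inv p n (k : ℕ) g hg (hg.inv p n)]
  have hjk' : (j : ℕ) ≠ (k : ℕ) := fun h => hjk (Fin.ext h)
  rw [rho_apply]
  by_cases hj : (j : ℕ) < (k : ℕ) + 1
  · have hjk2 : (j : ℕ) < (k : ℕ) := by omega
    rw [if_pos hj]
    have hagree : ∀ i : Fin n, i < j →
        rho p n (k : ℕ) g⁻¹ (hg.inv p n) x i = g⁻¹ x i := by
      intro i hi
      rw [rho_apply, if_pos (lt_trans (Fin.lt_def.mp hi) hjk2)]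
    have h2 := hg j (rho p n (k : ℕ) g⁻¹ (hg.inv p n) x) (g⁻¹ x) hagree
    have h3 : rho p n (k : ℕ) g⁻¹ (hg.inv p n) x j = g⁻¹ x j := by
      rw [rho_apply, if_pos hjk2]
    have h4 : g (g⁻¹ x) j = x j := by rw [Equiv.Perm.inv_def, Equiv.apply_symm_apply]
    rw [h3, h4] at h2
    linear_combination h2
  · rw [if_neg hj, rho_apply, if_neg (by omega : ¬ (j : ℕ) < (k : ℕ))]

lemma revProd_succ {G : Type*} [Monoid G] {N : ℕ} (c : Fin (N + 1) → G) :
    (List.ofFn c).reverse.prod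
      = c (Fin.last N) * (List.ofFn (fun j : Fin N => c j.castSucc)).reverse.prod := by
  rw [List.ofFn_succ']
  simp [List.concat_eq_append]

lemma telescope {G : Type*} [Group G] (N : ℕ) (D : ℕ → G) :
    (List.ofFn (fun k : Fin N => D ((k : ℕ) + 1) * (D (k : ℕ))⁻¹)).reverse.prod
      = D N * (D 0)⁻¹ := by
  induction N with
  | zero => simp
  | succ N ih =>
    rw [revProd_succ]
    simp only [Fin.coe_castSucc, Fin.val_last]
    rw [ih]
    group

lemma hom_R {G H : Type*} [Monoid G] [Monoid H] (φ : G →* H) {N : ℕ}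
    (c : Fin N → G) :
    φ (List.ofFn c).reverse.prod = (List.ofFn (fun j => φ (c j))).reverse.prod := by
  rw [map_list_prod]
  congr 1
  rw [List.map_reverse, List.map_ofFn]
  rfl

lemma trunc_prod_succ {G : Type*} [Monoid G] :
    ∀ {N : ℕ} (c : Fin N → G) (m : ℕ) (hm : m < N),
    (List.ofFn (fun j : Fin N => if (j : ℕ) < m + 1 then c j else 1)).reverse.prod
      = c ⟨m, hm⟩ *
        (List.ofFn (fun j : Fin N => if (j : ℕ) < m then c j else 1)).reverse.prod := by
  intro N
  induction N with
  | zero => intro c m hm; omega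
  | succ N ih =>
    intro c m hm
    rw [revProd_succ, revProd_succ]
    by_cases h : m = N
    · subst h
      have he : (fun j : Fin m => if ((j.castSucc : Fin (m + 1)) : ℕ) < m + 1
            then c j.castSucc else 1)
          = fun j : Fin m => if ((j.castSucc : Fin (m + 1)) : ℕ) < m
            then c j.castSucc else 1 := by
        funext j
        have hj := j.isLt
        rw [if_pos (by simp only [Fin.coe_castSucc]; omega),
          if_pos (by simp only [Fin.coe_castSucc]; omega)]
      rw [he]
      have h1 : ((Fin.last m : Fin (m + 1)) : ℕ) < m + 1 := by simp
      have h2 : ¬ ((Fin.last m : Fin (m + 1)) : ℕ) < m := by simp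
      rw [if_pos h1, if_neg h2, one_mul]
      rfl
    · have hm' : m < N := by omega
      have h1 : ¬ ((Fin.last N : Fin (N + 1)) : ℕ) < m + 1 := by
        simp only [Fin.val_last]; omega
      have h2 : ¬ ((Fin.last N : Fin (N + 1)) : ℕ) < m := by
        simp only [Fin.val_last]; omega
      rw [if_neg h1, if_neg h2, one_mul, one_mul]
      have := ih (fun j : Fin N => c j.castSucc) m hm'
      simp only [Fin.coe_castSucc] at this ⊢
      rw [this]
      rfl

end Wreath

/-- `γ_i(W_n) = (γ_i(W_n) ∩ B_n) ⋊ ⋯ ⋊ (γ_i(W_n) ∩ B_1)` : every element of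
`γ_i(W_n)` has a unique decomposition as an (ordered) product of elements of the
`γ_i(W_n) ∩ B_j`. -/
theorem gamma_decomposition (p n : ℕ) (hp : p.Prime) (hodd : p ≠ 2)
    (i : ℕ) (hi : 1 ≤ i) :
    ∀ g ∈ Wreath.gammaP p n i,
      ∃! c : Fin n → Equiv.Perm (Wreath.Pts p n),
        (∀ j, c j ∈ Wreath.gammaP p n i ⊓ Wreath.B p n j) ∧
        g = (List.ofFn c).reverse.prod := by
  rintro g hg
  rw [Wreath.gammaP, Subgroup.mem_map] at hg
  obtain ⟨g', hg', rfl⟩ := hg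
  -- the components, as elements of `W`
  set chat : Fin n → ↥(Wreath.W p n) :=
    fun k => Wreath.rhoHom p n ((k : ℕ) + 1) g' * (Wreath.rhoHom p n (k : ℕ) g')⁻¹
    with hchat
  have hrmem : ∀ m : ℕ,
      Wreath.rhoHom p n m g' ∈ (⊤ : Subgroup ↥(Wreath.W p n)).lowerCentralSeries (i - 1) :=
    fun m => lowerCentralSeries.map (Wreath.rhoHom p n m) (i - 1) ⟨g', hg', rfl⟩
  have hchatmem : ∀ k, chat k ∈ (⊤ : Subgroup ↥(Wreath.W p n)).lowerCentralSeries (i - 1) :=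
    fun k => mul_mem (hrmem _) (inv_mem (hrmem _))
  refine ⟨fun k => ((chat k : ↥(Wreath.W p n)) : Equiv.Perm (Wreath.Pts p n)),
    ⟨?_, ?_⟩, ?_⟩
  · intro j
    rw [Subgroup.mem_inf]
    constructor
    · exact Subgroup.mem_map.mpr ⟨chat j, hchatmem j, rfl⟩
    · exact Wreath.comp_mem_B p n g'.1 g'.2.1 j
  · have h1 : (List.ofFn fun k : Fin n =>
        ((chat k : ↥(Wreath.W p n)) : Equiv.Perm (Wreath.Pts p n))).reverse.prod
        = ((List.ofFn chat).reverse.prod : ↥(Wreath.W p n)) :=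
      (Wreath.hom_R (Wreath.W p n).subtype chat).symm
    have h2 : (List.ofFn chat).reverse.prod = g' := by
      rw [hchat]
      rw [Wreath.telescope n (fun m => Wreath.rhoHom p n m g')]
      have hn : Wreath.rhoHom p n n g' = g' :=
        Subtype.ext (Wreath.rho_of_n p n g'.1 g'.2.1)
      have h0 : Wreath.rhoHom p n 0 g' = 1 :=
        Subtype.ext (Wreath.rho_zero p n g'.1 g'.2.1)
      rw [hn, h0, inv_one, mul_one]
    rw [h1, h2]
    rfl
  · rintro c' ⟨hmem, hprod⟩
    have hB : ∀ j, c' j ∈ Wreath.B p n j :=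
      fun j => (Subgroup.mem_inf.mp (hmem j)).2
    set chat' : Fin n → ↥(Wreath.W p n) :=
      fun j => ⟨c' j, Wreath.mem_W_of_triangular p n (hB j).1⟩ with hchat'
    have hg'eq : g' = (List.ofFn chat').reverse.prod := by
      apply Subtype.coe_injective
      show (Wreath.W p n).subtype g'
        = (Wreath.W p n).subtype (List.ofFn chat').reverse.prod
      rw [Wreath.hom_R (Wreath.W p n).subtype chat']
      exact hprod
    have key : ∀ m : ℕ, Wreath.rhoHom p n m g'
        = (List.ofFn (fun j : Fin n =>
            if (j : ℕ) < m then chat' j else 1)).reverse.prod := by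
      intro m
      conv_lhs => rw [hg'eq]
      rw [Wreath.hom_R (Wreath.rhoHom p n m) chat']
      congr 1
      congr 1
      congr 1
      funext j
      by_cases h : (j : ℕ) < m
      · rw [if_pos h]
        exact Subtype.ext (Wreath.rho_B_lt p n m j (c' j) (hB j) h)
      · rw [if_neg h]
        exact Subtype.ext (Wreath.rho_B_ge p n m j (c' j) (hB j) (by omega))
    have hcomp : ∀ k : Fin n, chat' k = chat k := by
      intro k
      have h5 := key ((k : ℕ) + 1)
      have h6 := key (k : ℕ)
      have h7 := Wreath.trunc_prod_succ chat' (k : ℕ) k.isLt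
      rw [← h5, ← h6] at h7
      have h8 : (⟨(k : ℕ), k.isLt⟩ : Fin n) = k := rfl
      rw [h8] at h7
      show chat' k = Wreath.rhoHom p n ((k : ℕ) + 1) g'
        * (Wreath.rhoHom p n (k : ℕ) g')⁻¹
      rw [h7]
      group
    funext k
    calc c' k = ((chat' k : ↥(Wreath.W p n)) : Equiv.Perm (Wreath.Pts p n)) := rfl
    _ = ((chat k : ↥(Wreath.W p n)) : Equiv.Perm (Wreath.Pts p n)) := by rw [hcomp k]
end
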